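/- For every real number T > 0, one has 2·sinh(T/2)·(cosh(T/2) − 1)/(T·sinh(T) − 2·(cosh(T) − 1)) ≤ 3/(2·T); that is, the midpoint value of the optimal velocity satisfies |v*(T/2)| ≤ (3·|q̃|/2)/T. -/
import Mathlib

open Real

private lemma aux_deriv1 : ∀ x : ℝ, HasDerivAt (fun y => y * Real.cosh y - Real.sinh y)
    (x * Real.sinh x) x := by
  intro x
  have h : HasDerivAt (fun y => y * Real.cosh y - Real.sinh y)
      (1 * Real.cosh x + x * Real.sinh x - Real.cosh x) x :=
    ((hasDerivAt_id x).mul (Real.hasDerivAt_cosh x)).sub (Real.hasDerivAt_sinh x)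
  convert h using 1; ring

private lemma aux1 {x : ℝ} (hx : 0 < x) : Real.sinh x < x * Real.cosh x := by
  have hmono : StrictMonoOn (fun y => y * Real.cosh y - Real.sinh y) (Set.Ici (0:ℝ)) := by
    apply strictMonoOn_of_deriv_pos (convex_Ici 0)
    · exact (Continuous.mul continuous_id Real.continuous_cosh).sub Real.continuous_sinh
        |>.continuousOn
    · intro y hy
      rw [interior_Ici] at hy
      rw [(aux_deriv1 y).deriv]
      exact mul_pos hy (Real.sinh_pos_iff.2 hy)
  have := hmono (Set.self_mem_Ici) (Set.mem_Ici.2 hx.le) hx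
  simpa using this

private lemma aux1' {x : ℝ} (hx : 0 ≤ x) : Real.sinh x ≤ x * Real.cosh x := by
  rcases eq_or_lt_of_le hx with h | h
  · simp [← h]
  · exact (aux1 h).le

private lemma aux_deriv2 : ∀ x : ℝ, HasDerivAt (fun y => y * Real.sinh y + 2 - 2 * Real.cosh y)
    (x * Real.cosh x + Real.sinh x - 2 * Real.sinh x) x := by
  intro x
  have h : HasDerivAt (fun y => y * Real.sinh y + 2 - 2 * Real.cosh y)
      ((1 * Real.sinh x + x * Real.cosh x + 0) - 2 * Real.sinh x) x :=
    (((hasDerivAt_id x).mul (Real.hasDerivAt_sinh x)).add (hasDerivAt_const x 2)).sub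
      ((Real.hasDerivAt_cosh x).const_mul 2)
  convert h using 1; ring

private lemma aux2 {x : ℝ} (hx : 0 ≤ x) : 2 * Real.cosh x ≤ x * Real.sinh x + 2 := by
  have hmono : MonotoneOn (fun y => y * Real.sinh y + 2 - 2 * Real.cosh y) (Set.Ici (0:ℝ)) := by
    apply monotoneOn_of_deriv_nonneg (convex_Ici 0)
    · exact ((Continuous.mul continuous_id Real.continuous_sinh).add continuous_const).sub
        (continuous_const.mul Real.continuous_cosh) |>.continuousOn
    · intro y hy
      exact ((aux_deriv2 y).differentiableAt).differentiableWithinAt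
    · intro y hy
      rw [interior_Ici] at hy
      rw [(aux_deriv2 y).deriv]
      have := aux1' hy.le
      linarith
  have := hmono Set.self_mem_Ici (Set.mem_Ici.2 hx) hx
  simp only [Real.sinh_zero, Real.cosh_zero] at this
  linarith

private lemma aux_deriv3 : ∀ x : ℝ, HasDerivAt (fun y => y * Real.cosh y + 2 * y - 3 * Real.sinh y)
    (Real.cosh x + x * Real.sinh x + 2 - 3 * Real.cosh x) x := by
  intro x
  have h : HasDerivAt (fun y => y * Real.cosh y + 2 * y - 3 * Real.sinh y)
      ((1 * Real.cosh x + x * Real.sinh x + 2 * 1) - 3 * Real.cosh x) x :=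
    (((hasDerivAt_id x).mul (Real.hasDerivAt_cosh x)).add ((hasDerivAt_id x).const_mul 2)).sub
      ((Real.hasDerivAt_sinh x).const_mul 3)
  convert h using 1; ring

private lemma aux3 {x : ℝ} (hx : 0 ≤ x) : 3 * Real.sinh x ≤ x * Real.cosh x + 2 * x := by
  have hmono : MonotoneOn (fun y => y * Real.cosh y + 2 * y - 3 * Real.sinh y) (Set.Ici (0:ℝ)) := by
    apply monotoneOn_of_deriv_nonneg (convex_Ici 0)
    · exact ((Continuous.mul continuous_id Real.continuous_cosh).add
        (continuous_const.mul continuous_id)).sub (continuous_const.mul Real.continuous_sinh) |>.continuousOn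
    · intro y hy
      exact ((aux_deriv3 y).differentiableAt).differentiableWithinAt
    · intro y hy
      rw [interior_Ici] at hy
      rw [(aux_deriv3 y).deriv]
      have := aux2 hy.le
      linarith
  have := hmono Set.self_mem_Ici (Set.mem_Ici.2 hx) hx
  simp only [Real.sinh_zero, Real.cosh_zero] at this
  linarith

/-- Midpoint bound: for every real `T > 0`,
`2 sinh(T/2) (cosh(T/2) - 1) / (T sinh T - 2 (cosh T - 1)) ≤ 3 / (2 T)`. -/
theorem midpoint_velocity_bound (T : ℝ) (hT : 0 < T) :
    2 * Real.sinh (T / 2) * (Real.cosh (T / 2) - 1) /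
        (T * Real.sinh T - 2 * (Real.cosh T - 1)) ≤ 3 / (2 * T) := by
  set s := Real.sinh (T / 2) with hs
  set c := Real.cosh (T / 2) with hc
  have hx : (0:ℝ) < T / 2 := by linarith
  have hspos : 0 < s := Real.sinh_pos_iff.2 hx
  have hsinh : Real.sinh T = 2 * s * c := by
    rw [hs, hc, ← Real.sinh_two_mul]; ring_nf
  have hcosh : Real.cosh T = c ^ 2 + s ^ 2 := by
    rw [hc, hs, ← Real.cosh_two_mul]; ring_nf
  have hsq : c ^ 2 - 1 = s ^ 2 := by
    rw [hs, hc, Real.cosh_sq]; ring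
  have h1 : Real.sinh (T/2) < (T/2) * Real.cosh (T/2) := aux1 hx
  have h3 : 3 * Real.sinh (T/2) ≤ (T/2) * Real.cosh (T/2) + 2 * (T/2) := aux3 hx.le
  rw [← hs, ← hc] at h1 h3
  have hden : 0 < T * Real.sinh T - 2 * (Real.cosh T - 1) := by
    rw [hsinh, hcosh]
    nlinarith [hsq]
  rw [div_le_div_iff₀ hden (by linarith : (0:ℝ) < 2 * T)]
  rw [hsinh, hcosh]
  nlinarith [hsq, mul_pos hspos hT, mul_le_mul_of_nonneg_left h3 hspos.le]
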